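/- Let Z, X, φ ∈ ℝ with cos φ ≠ 0, let h₀ : ℝ → ℝ be differentiable, let δh : ℝ → ℝ be continuous at x₀, and let x : (−ε, ε) → ℝ be continuous, differentiable at 0, with x(0) = x₀. Suppose Z − (h₀(x(t)) + t·δh(x(t))) = (X − x(t)) tan φ for all t ∈ (−ε, ε) and tan φ ≠ h₀'(x₀). Then x'(0) = δh(x₀) / (tan φ − h₀'(x₀)). -/

import Mathlib

/-- first variation of the intersection abscissa under the
perturbation `h_t = h₀ + t·δh` of the cloud height:
`δx = δh(x₀) / (tan φ - h₀'(x₀))`. -/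
theorem cloud_intersection_first_variation
    (Z X φ : ℝ) (hcos : Real.cos φ ≠ 0)
    (h₀ : ℝ → ℝ) (hh₀ : Differentiable ℝ h₀)
    (δh : ℝ → ℝ) (x₀ : ℝ) (hδh : ContinuousAt δh x₀)
    (ε : ℝ) (hε : 0 < ε)
    (x : ℝ → ℝ) (hxc : ContinuousOn x (Set.Ioo (-ε) ε))
    (hxd : DifferentiableAt ℝ x 0) (hx0 : x 0 = x₀)
    (heq : ∀ t ∈ Set.Ioo (-ε) ε,
      Z - (h₀ (x t) + t * δh (x t)) = (X - x t) * Real.tan φ)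
    (hne : Real.tan φ ≠ deriv h₀ x₀) :
    deriv x 0 = δh x₀ / (Real.tan φ - deriv h₀ x₀) := by
  have h0mem : (0:ℝ) ∈ Set.Ioo (-ε) ε := ⟨by linarith, hε⟩
  have hnhds : Set.Ioo (-ε) ε ∈ nhds (0:ℝ) := isOpen_Ioo.mem_nhds h0mem
  have hxcont : ContinuousAt x 0 := hxc.continuousAt hnhds
  -- derivative of t ↦ t * δh (x t) at 0 is δh x₀
  have hδcomp : Filter.Tendsto (fun t => δh (x t)) (nhds 0) (nhds (δh x₀)) := by
    have h1 : ContinuousAt δh (x 0) := by rw [hx0]; exact hδh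
    have := (h1.comp hxcont).tendsto
    simpa [Function.comp_def, hx0] using this
  have hg : HasDerivAt (fun t => t * δh (x t)) (δh x₀) 0 := by
    rw [hasDerivAt_iff_tendsto_slope]
    have : Filter.Tendsto (fun t => δh (x t)) (nhdsWithin 0 {(0:ℝ)}ᶜ)
        (nhds (δh x₀)) := hδcomp.mono_left nhdsWithin_le_nhds
    refine this.congr' ?_
    filter_upwards [self_mem_nhdsWithin] with t ht
    have ht' : t ≠ 0 := ht
    simp [slope_def_field, ht']
  -- derivative of t ↦ h₀ (x t)
  have hh : HasDerivAt (fun t => h₀ (x t)) (deriv h₀ x₀ * deriv x 0) 0 := by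
    have hd1 : HasDerivAt h₀ (deriv h₀ x₀) (x 0) := by rw [hx0]; exact (hh₀ x₀).hasDerivAt
    have := hd1.comp 0 hxd.hasDerivAt
    simpa [Function.comp_def] using this
  -- F is eventually 0, so its derivative at 0 is 0
  set c : ℝ := (0 - (deriv h₀ x₀ * deriv x 0 + δh x₀)) - (0 - deriv x 0) * Real.tan φ with hc
  have hF : HasDerivAt (fun t => Z - (h₀ (x t) + t * δh (x t)) - (X - x t) * Real.tan φ) c 0 := by
    have h1 : HasDerivAt (fun t => Z - (h₀ (x t) + t * δh (x t)))
        (0 - (deriv h₀ x₀ * deriv x 0 + δh x₀)) 0 :=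
      (hasDerivAt_const 0 Z).sub (hh.add hg)
    have h2 : HasDerivAt (fun t => (X - x t) * Real.tan φ)
        ((0 - deriv x 0) * Real.tan φ) 0 :=
      ((hasDerivAt_const 0 X).sub hxd.hasDerivAt).mul_const _
    exact h1.sub h2
  have hF0 : HasDerivAt (fun _ : ℝ => (0:ℝ)) c 0 := by
    refine hF.congr_of_eventuallyEq ?_
    filter_upwards [hnhds] with t ht
    have := heq t ht
    linarith
  have hc0 : c = 0 := hF0.unique (hasDerivAt_const 0 0)
  have hsub : Real.tan φ - deriv h₀ x₀ ≠ 0 := sub_ne_zero.mpr hne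
  rw [hc] at hc0
  field_simp
  linarith [hc0]
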